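/- Let α/β and γ/δ be skew shapes. A skew tableau E of shape α/β with entries in positive integers is the row reading of some picture f : α/β → γ/δ if and only if E is semistandard, for each i the symbol i occurs exactly γᵢ − δᵢ times in E, and E is δ-shifted Yamanouchi, i.e. for every initial segment w′ of the reading word w(E) and every i one has δᵢ + aᵢ(w′) ≥ δᵢ₊₁ + aᵢ₊₁(w′), where aᵢ(w′) is the number of occurrences of the symbol i in w′. -/

import Mathlib

noncomputable section

/-- A partition, written 1-based: `α i` is the length of row `i` for `i ≥ 1`
(we normalize `α 0 = 0`); it is weakly decreasing and eventually zero. -/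
def IsPartition (α : ℕ → ℕ) : Prop :=
  α 0 = 0 ∧ (∀ i j, 1 ≤ i → i ≤ j → α j ≤ α i) ∧ ∃ N, ∀ i, N ≤ i → α i = 0

/-- The set of cells of the skew diagram `α/β` (rows and columns 1-based):
`(i,j)` with `β i < j ≤ α i`. -/
def cellOf (α β : ℕ → ℕ) : Set (ℕ × ℕ) := {p | β p.1 < p.2 ∧ p.2 ≤ α p.1}

/-- The conjugate partition (1-based): `(conjP α) j = #{i ≥ 1 | α i ≥ j}` for `j ≥ 1`. -/
def conjP (α : ℕ → ℕ) (j : ℕ) : ℕ := Set.ncard {i : ℕ | 1 ≤ i ∧ 1 ≤ j ∧ j ≤ α i}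

/-- Semistandard skew tableau: entries weakly increase along rows (left to right) and
strictly increase down columns. -/
def IsSSkew (α β : ℕ → ℕ) (T : ℕ × ℕ → ℕ) : Prop :=
  (∀ i j j', (i, j) ∈ cellOf α β → (i, j') ∈ cellOf α β → j ≤ j' → T (i, j) ≤ T (i, j')) ∧
  (∀ i i' j, (i, j) ∈ cellOf α β → (i', j) ∈ cellOf α β → i < i' → T (i, j) < T (i', j))

/-- Anti-semistandard skew tableau: entries strictly decrease along rows (left to right)
and weakly decrease down columns. -/
def IsAntiSSkew (α β : ℕ → ℕ) (T : ℕ × ℕ → ℕ) : Prop :=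
  (∀ i j j', (i, j) ∈ cellOf α β → (i, j') ∈ cellOf α β → j < j' → T (i, j') < T (i, j)) ∧
  (∀ i i' j, (i, j) ∈ cellOf α β → (i', j) ∈ cellOf α β → i ≤ i' → T (i', j) ≤ T (i, j))

/-- `wle p q` : cell `p` comes weakly before cell `q` in the reading order of the reading
word (rows top to bottom, inside each row right to left). -/
def wle (p q : ℕ × ℕ) : Prop := p.1 < q.1 ∨ (p.1 = q.1 ∧ q.2 ≤ p.2)

/-- Number of occurrences of the symbol `v` among the cells weakly before `x` in the
reading word of `T` (so "the `j`-th occurrence of `v` in `w(T)` is at the cell `x`" reads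
`x ∈ cellOf α β ∧ T x = v ∧ occBefore α β T v x = j`). -/
def occBefore (α β : ℕ → ℕ) (T : ℕ × ℕ → ℕ) (v : ℕ) (x : ℕ × ℕ) : ℕ :=
  Set.ncard {p | p ∈ cellOf α β ∧ wle p x ∧ T p = v}

/-- Total number of occurrences of the symbol `v` in the skew tableau `T`. -/
def occCount (α β : ℕ → ℕ) (T : ℕ × ℕ → ℕ) (v : ℕ) : ℕ :=
  Set.ncard {p | p ∈ cellOf α β ∧ T p = v}

/-- The reading word of `T` is a lattice word for the symbols `base, base+1, …` :
in every initial segment, `v+1` occurs at most as often as `v`, for every `v ≥ base`. -/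
def IsLatticeFrom (α β : ℕ → ℕ) (T : ℕ × ℕ → ℕ) (base : ℕ) : Prop :=
  ∀ x ∈ cellOf α β, ∀ v, base ≤ v → occBefore α β T (v + 1) x ≤ occBefore α β T v x

/-- `T` (with symbols `m+1, m+2, …`) is shifted Yamanouchi with respect to the shift `ω`:
for every initial segment `w′` of the reading word and every `i ≥ 1`,
`ω i + a_i(w′) ≥ ω (i+1) + a_{i+1}(w′)`. -/
def ShiftedYam (α β : ℕ → ℕ) (m : ℕ) (ω : ℕ → ℕ) (T : ℕ × ℕ → ℕ) : Prop :=
  ∀ x ∈ cellOf α β, ∀ i, 1 ≤ i →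
    ω (i + 1) + occBefore α β T (m + i + 1) x ≤ ω i + occBefore α β T (m + i) x

/-- `Tm = Rp(Tp)` : if the `j`-th occurrence of the symbol `m+i` in the reading word of
`Tp` lies in column `c` of `Tp`, then the entry of `Tm` at the cell `(i, ω i + j)` is `c`. -/
def IsRp (α β : ℕ → ℕ) (m : ℕ) (ω : ℕ → ℕ) (Tp Tm : ℕ × ℕ → ℕ) : Prop :=
  ∀ x ∈ cellOf α β, ∀ i, 1 ≤ i → Tp x = m + i →
    Tm (i, ω i + occBefore α β Tp (m + i) x) = x.2

/-- `λ⁺` : the first `m` rows of `λ`. -/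
def lamPlus (m : ℕ) (la : ℕ → ℕ) : ℕ → ℕ := fun i => if i ≤ m then la i else 0

/-- `λ⁻` : the conjugate of the partition `(λ_{m+1}, λ_{m+2}, …)`. -/
def lamMinus (m : ℕ) (la : ℕ → ℕ) : ℕ → ℕ :=
  conjP (fun i => if 1 ≤ i then la (m + i) else 0)

/-- `p ≤_NW q`. -/
def leNW (p q : ℕ × ℕ) : Prop := p.1 ≤ q.1 ∧ p.2 ≤ q.2

/-- `p ≤_SW q`. -/
def leSW (p q : ℕ × ℕ) : Prop := p.1 ≤ q.1 ∧ q.2 ≤ p.2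

/-- A picture `f : α/β → γ/δ` : a bijection of the cell sets such that
`x ≤_NW y → f x ≤_SW f y` and `f x ≤_NW f y → x ≤_SW y`. -/
def IsPicture (α β γ δ : ℕ → ℕ) (f : ℕ × ℕ → ℕ × ℕ) : Prop :=
  Set.BijOn f (cellOf α β) (cellOf γ δ) ∧
    (∀ p ∈ cellOf α β, ∀ q ∈ cellOf α β, leNW p q → leSW (f p) (f q)) ∧
    (∀ p ∈ cellOf α β, ∀ q ∈ cellOf α β, leNW (f p) (f q) → leSW p q)

section Basics

variable {α β : ℕ → ℕ}

lemma wle_refl (p : ℕ × ℕ) : wle p p := by unfold wle; omega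

lemma wle_trans {p q r : ℕ × ℕ} (h1 : wle p q) (h2 : wle q r) : wle p r := by
  unfold wle at *; omega

lemma wle_total (p q : ℕ × ℕ) : wle p q ∨ wle q p := by unfold wle; omega

lemma wle_antisymm {p q : ℕ × ℕ} (h1 : wle p q) (h2 : wle q p) : p = q := by
  unfold wle at *
  have : p.1 = q.1 ∧ p.2 = q.2 := by omega
  exact Prod.ext this.1 this.2

lemma cell_pos (hα : IsPartition α) {p : ℕ × ℕ} (hp : p ∈ cellOf α β) :
    1 ≤ p.1 ∧ 1 ≤ p.2 := by
  obtain ⟨h0, hmono, -⟩ := hα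
  obtain ⟨h1, h2⟩ := hp
  have hp2 : 1 ≤ p.2 := by omega
  refine ⟨?_, hp2⟩
  rcases Nat.eq_zero_or_pos p.1 with h | h
  · rw [h, h0] at h2; omega
  · exact h

lemma cell_finite (hα : IsPartition α) : (cellOf α β).Finite := by
  obtain ⟨h0, hmono, N, hN⟩ := hα
  set M := (Finset.range N).sup α with hM
  apply Set.Finite.subset (Set.finite_Iio N |>.prod (Set.finite_Iic M))
  rintro p ⟨h1, h2⟩
  have hpN : p.1 < N := by
    by_contra h
    push_neg at h
    rw [hN p.1 h] at h2; omega
  refine ⟨hpN, ?_⟩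
  simp only [Set.mem_Iic]
  exact le_trans h2 (Finset.le_sup (Finset.mem_range.mpr hpN))

lemma occSet_finite (hα : IsPartition α) (T : ℕ × ℕ → ℕ) (v : ℕ) (x : ℕ × ℕ) :
    {p | p ∈ cellOf α β ∧ wle p x ∧ T p = v}.Finite :=
  (cell_finite hα).subset (fun _ hp => hp.1)

lemma occCSet_finite (hα : IsPartition α) (T : ℕ × ℕ → ℕ) (v : ℕ) :
    {p | p ∈ cellOf α β ∧ T p = v}.Finite :=
  (cell_finite hα).subset (fun _ hp => hp.1)

lemma occBefore_mono (hα : IsPartition α) {T : ℕ × ℕ → ℕ} {v : ℕ} {x y : ℕ × ℕ}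
    (h : wle x y) : occBefore α β T v x ≤ occBefore α β T v y :=
  Set.ncard_le_ncard (fun p hp => ⟨hp.1, wle_trans hp.2.1 h, hp.2.2⟩)
    (occSet_finite hα T v y)

lemma occBefore_strict (hα : IsPartition α) {T : ℕ × ℕ → ℕ} {v : ℕ} {x y : ℕ × ℕ}
    (hy : y ∈ cellOf α β) (hTy : T y = v) (h : wle x y) (hne : x ≠ y) :
    occBefore α β T v x < occBefore α β T v y := by
  apply Set.ncard_lt_ncard _ (occSet_finite hα T v y)
  constructor
  · exact fun p hp => ⟨hp.1, wle_trans hp.2.1 h, hp.2.2⟩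
  · intro hsub
    have := hsub ⟨hy, wle_refl y, hTy⟩
    exact hne (wle_antisymm h this.2.1)

lemma occBefore_pos (hα : IsPartition α) {T : ℕ × ℕ → ℕ} {v : ℕ} {x : ℕ × ℕ}
    (hx : x ∈ cellOf α β) (hTx : T x = v) : 1 ≤ occBefore α β T v x := by
  show 1 ≤ Set.ncard {p | p ∈ cellOf α β ∧ wle p x ∧ T p = v}
  rw [Nat.one_le_iff_ne_zero, ← Nat.pos_iff_ne_zero,
    Set.ncard_pos (occSet_finite hα T v x)]
  exact ⟨x, hx, wle_refl x, hTx⟩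

lemma occBefore_le_occCount (hα : IsPartition α) (T : ℕ × ℕ → ℕ) (v : ℕ) (x : ℕ × ℕ) :
    occBefore α β T v x ≤ occCount α β T v :=
  Set.ncard_le_ncard (fun p hp => ⟨hp.1, hp.2.2⟩) (occCSet_finite hα T v)

lemma yam_chain {δ : ℕ → ℕ} {T' : ℕ × ℕ → ℕ} (hδ : IsPartition δ)
    (hY : ShiftedYam α β 0 δ T') {x : ℕ × ℕ} (hx : x ∈ cellOf α β)
    {u v : ℕ} (hu : 1 ≤ u) (huv : u ≤ v) :
    δ v + occBefore α β T' v x ≤ δ u + occBefore α β T' u x := by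
  induction v, huv using Nat.le_induction with
  | base => exact le_refl _
  | succ n hn ih =>
      have := hY x hx n (le_trans hu hn)
      simp only [Nat.zero_add] at this
      omega

lemma exists_wle_max {S : Set (ℕ × ℕ)} (hS : S.Finite) (hne : S.Nonempty) :
    ∃ m ∈ S, ∀ p ∈ S, wle p m := by
  classical
  induction S, hS using Set.Finite.induction_on with
  | empty => exact absurd hne (by simp)
  | @insert a s ha hs ih =>
      rcases s.eq_empty_or_nonempty with rfl | hsne
      · exact ⟨a, by simp, by simp [wle_refl]⟩
      · obtain ⟨m, hm, hmax⟩ := ih hsne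
        rcases wle_total a m with h | h
        · exact ⟨m, Set.mem_insert_of_mem _ hm, by
            rintro p (rfl | hp)
            · exact h
            · exact hmax p hp⟩
        · exact ⟨a, Set.mem_insert _ _, by
            rintro p (rfl | hp)
            · exact wle_refl p
            · exact wle_trans (hmax p hp) h⟩

end Basics


lemma leSW_wle {p q : ℕ × ℕ} (h : leSW p q) : wle p q := by
  unfold leSW at h; unfold wle; omega

section RowSeg

variable {γ δ : ℕ → ℕ}

lemma rowSeg_eq {v c : ℕ} (hc : c ≤ γ v) :
    {y | y ∈ cellOf γ δ ∧ y.1 = v ∧ y.2 ≤ c} = (fun t => ((v : ℕ), t)) '' Set.Ioc (δ v) c := by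
  ext ⟨a, b⟩
  simp only [Set.mem_setOf_eq, Set.mem_image, Set.mem_Ioc, cellOf, Prod.mk.injEq]
  constructor
  · rintro ⟨⟨h1, h2⟩, rfl, h3⟩
    exact ⟨b, ⟨h1, h3⟩, rfl, rfl⟩
  · rintro ⟨t, ⟨h1, h2⟩, rfl, rfl⟩
    exact ⟨⟨h1, le_trans h2 hc⟩, rfl, h2⟩

lemma rowSeg_finite {v c : ℕ} (hc : c ≤ γ v) :
    {y | y ∈ cellOf γ δ ∧ y.1 = v ∧ y.2 ≤ c}.Finite := by
  rw [rowSeg_eq hc]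
  exact (Set.finite_Ioc _ _).image _

lemma rowSeg_ncard {v c : ℕ} (hc : c ≤ γ v) :
    ({y | y ∈ cellOf γ δ ∧ y.1 = v ∧ y.2 ≤ c}).ncard = c - δ v := by
  rw [rowSeg_eq hc, Set.ncard_image_of_injective _ (fun a b h => by simpa using h)]
  rw [← Finset.coe_Ioc, Set.ncard_coe_finset, Nat.card_Ioc]

lemma rowFull_eq {v : ℕ} :
    {y | y ∈ cellOf γ δ ∧ y.1 = v} = {y | y ∈ cellOf γ δ ∧ y.1 = v ∧ y.2 ≤ γ v} := by
  ext ⟨a, b⟩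
  simp only [Set.mem_setOf_eq, cellOf]
  constructor
  · rintro ⟨⟨h1, h2⟩, rfl⟩; exact ⟨⟨h1, h2⟩, rfl, h2⟩
  · rintro ⟨⟨h1, h2⟩, rfl, h3⟩; exact ⟨⟨h1, h2⟩, rfl⟩

lemma rowFull_ncard {v : ℕ} : ({y | y ∈ cellOf γ δ ∧ y.1 = v}).ncard = γ v - δ v := by
  rw [rowFull_eq, rowSeg_ncard (le_refl _)]

end RowSeg

section Forward

variable {α β γ δ : ℕ → ℕ} {f : ℕ × ℕ → ℕ × ℕ} {E : ℕ × ℕ → ℕ}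

lemma fwd_row (hf : IsPicture α β γ δ f) (hE : ∀ p ∈ cellOf α β, E p = (f p).1)
    {i j j' : ℕ} (h1 : (i, j) ∈ cellOf α β) (h2 : (i, j') ∈ cellOf α β) (h : j ≤ j') :
    E (i, j) ≤ E (i, j') := by
  rw [hE _ h1, hE _ h2]
  exact (hf.2.1 _ h1 _ h2 ⟨le_refl _, h⟩).1

lemma fwd_col (hf : IsPicture α β γ δ f) (hE : ∀ p ∈ cellOf α β, E p = (f p).1)
    {i i' j : ℕ} (h1 : (i, j) ∈ cellOf α β) (h2 : (i', j) ∈ cellOf α β) (h : i < i') :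
    E (i, j) < E (i', j) := by
  rw [hE _ h1, hE _ h2]
  have hsw := hf.2.1 _ h1 _ h2 ⟨le_of_lt h, le_refl _⟩
  rcases lt_or_eq_of_le hsw.1 with hlt | heq
  · exact hlt
  · exfalso
    have hc : (f (i', j)).2 ≤ (f (i, j)).2 := hsw.2
    rcases lt_or_eq_of_le hc with hlt2 | heq2
    · have := hf.2.2 _ h2 _ h1 ⟨le_of_eq heq.symm, le_of_lt hlt2⟩
      unfold leSW at this; omega
    · have hfe : f (i, j) = f (i', j) := Prod.ext heq heq2.symm
      have := hf.1.2.1 h1 h2 hfe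
      simp only [Prod.mk.injEq] at this
      omega

lemma fwd_HC (hf : IsPicture α β γ δ f)
    {p q : ℕ × ℕ} (hp : p ∈ cellOf α β) (hq : q ∈ cellOf α β)
    (hv : (f p).1 = (f q).1) (hw : wle p q) (hne : p ≠ q) : (f p).2 < (f q).2 := by
  have hfne : f p ≠ f q := fun h => hne (hf.1.2.1 hp hq h)
  rcases hw with hlt | ⟨heq, hle⟩
  · by_contra hcon
    push_neg at hcon
    have := hf.2.2 _ hq _ hp ⟨le_of_eq hv.symm, hcon⟩
    unfold leSW at this; omega
  · have hlt : q.2 < p.2 := by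
      rcases lt_or_eq_of_le hle with h | h
      · exact h
      · exact absurd (Prod.ext heq h.symm) hne
    have hsw := hf.2.1 _ hq _ hp ⟨le_of_eq heq.symm, le_of_lt hlt⟩
    have h2 : (f p).2 ≤ (f q).2 := hsw.2
    rcases lt_or_eq_of_le h2 with h | h
    · exact h
    · exact absurd (Prod.ext hv h) hfne

lemma fwd_occ_image (hf : IsPicture α β γ δ f) (hE : ∀ p ∈ cellOf α β, E p = (f p).1)
    (v : ℕ) :
    f '' {p | p ∈ cellOf α β ∧ E p = v} = {y | y ∈ cellOf γ δ ∧ y.1 = v} := by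
  ext y
  constructor
  · rintro ⟨p, ⟨hp, hv⟩, rfl⟩
    exact ⟨hf.1.1 hp, by rw [← hE _ hp, hv]⟩
  · rintro ⟨hy, hv⟩
    obtain ⟨p, hp, rfl⟩ := hf.1.2.2 hy
    exact ⟨p, ⟨hp, by rw [hE _ hp, hv]⟩, rfl⟩

lemma fwd_occCount (hα : IsPartition α) (hf : IsPicture α β γ δ f)
    (hE : ∀ p ∈ cellOf α β, E p = (f p).1) (v : ℕ) :
    occCount α β E v = γ v - δ v := by
  have h1 : occCount α β E v = (f '' {p | p ∈ cellOf α β ∧ E p = v}).ncard := by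
    rw [Set.ncard_image_of_injOn (hf.1.2.1.mono (fun p hp => hp.1))]
    rfl
  rw [h1, fwd_occ_image hf hE v, rowFull_ncard]

lemma fwd_seg (hα : IsPartition α) (hf : IsPicture α β γ δ f)
    (hE : ∀ p ∈ cellOf α β, E p = (f p).1) {x : ℕ × ℕ} (hx : x ∈ cellOf α β) (v : ℕ) :
    f '' {p | p ∈ cellOf α β ∧ wle p x ∧ E p = v} =
      {y | y.1 = v ∧ δ v < y.2 ∧ y.2 ≤ δ v + occBefore α β E v x} := by
  classical
  set a := occBefore α β E v x with ha
  set S := {p | p ∈ cellOf α β ∧ wle p x ∧ E p = v} with hSdef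
  set O := {p | p ∈ cellOf α β ∧ E p = v} with hOdef
  have hSO : S ⊆ O := fun p hp => ⟨hp.1, hp.2.2⟩
  have hSfin : S.Finite := occSet_finite hα E v x
  have hinj : Set.InjOn f (cellOf α β) := hf.1.2.1
  have hSncard : (f '' S).ncard = a := by
    rw [Set.ncard_image_of_injOn (hinj.mono (fun p hp => hp.1))]
    rfl
  have hcomp : ∀ s ∈ S, ∀ t ∈ O, t ∉ S → (f s).2 < (f t).2 := by
    intro s hs t ht htS
    have hst : wle s t := by
      rcases wle_total t x with h | h
      · exact absurd ⟨ht.1, h, ht.2⟩ htS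
      · exact wle_trans hs.2.1 h
    have hne : s ≠ t := fun h => htS (h ▸ hs)
    apply fwd_HC hf hs.1 ht.1 _ hst hne
    rw [← hE _ hs.1, ← hE _ ht.1, hs.2.2, ht.2]
  have haO : a ≤ γ v - δ v := by
    rw [← fwd_occCount hα hf hE v]
    exact occBefore_le_occCount hα E v x
  ext y
  simp only [Set.mem_setOf_eq]
  constructor
  · rintro ⟨s, hs, rfl⟩
    have hfs : f s ∈ cellOf γ δ := hf.1.1 hs.1
    have hfv : (f s).1 = v := by rw [← hE _ hs.1, hs.2.2]
    have hlo : δ v < (f s).2 := by rw [← hfv]; exact hfs.1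
    have hcle : (f s).2 ≤ γ v := by rw [← hfv]; exact hfs.2
    refine ⟨hfv, hlo, ?_⟩
    have hdown : {z | z ∈ cellOf γ δ ∧ z.1 = v ∧ z.2 ≤ (f s).2} ⊆ f '' S := by
      rintro z ⟨hz, hzv, hzc⟩
      have hzO : z ∈ f '' O := by rw [fwd_occ_image hf hE v]; exact ⟨hz, hzv⟩
      obtain ⟨t, ht, rfl⟩ := hzO
      by_cases htS : t ∈ S
      · exact ⟨t, htS, rfl⟩
      · exact absurd hzc (by push_neg; exact hcomp s hs t ht htS)
    have hle := Set.ncard_le_ncard hdown (hSfin.image f)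
    rw [rowSeg_ncard hcle, hSncard] at hle
    omega
  · rintro ⟨hyv, hylo, hyhi⟩
    rcases Nat.eq_zero_or_pos a with h0 | h1
    · omega
    have hyγ : y.2 ≤ γ v := by omega
    have hyB : y ∈ cellOf γ δ := by
      constructor
      · rw [hyv]; exact hylo
      · rw [hyv]; exact hyγ
    have hyO : y ∈ f '' O := by rw [fwd_occ_image hf hE v]; exact ⟨hyB, hyv⟩
    obtain ⟨t, ht, rfl⟩ := hyO
    by_cases htS : t ∈ S
    · exact ⟨t, htS, rfl⟩
    · exfalso
      have hup : f '' S ⊆ {z | z ∈ cellOf γ δ ∧ z.1 = v ∧ z.2 ≤ (f t).2 - 1} := by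
        rintro z ⟨s, hs, rfl⟩
        have := hcomp s hs t ht htS
        exact ⟨hf.1.1 hs.1, by rw [← hE _ hs.1, hs.2.2], by omega⟩
      have hcle : (f t).2 - 1 ≤ γ v := by omega
      have hle := Set.ncard_le_ncard hup (rowSeg_finite hcle)
      rw [rowSeg_ncard hcle, hSncard] at hle
      omega

lemma fwd_yam (hα : IsPartition α) (hγ : IsPartition γ) (hδ : IsPartition δ)
    (hf : IsPicture α β γ δ f) (hE : ∀ p ∈ cellOf α β, E p = (f p).1) :
    ShiftedYam α β 0 δ E := by
  intro x hx i hi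
  simp only [Nat.zero_add]
  set a := occBefore α β E i x with ha
  set b := occBefore α β E (i + 1) x with hb
  rcases Nat.eq_zero_or_pos b with h0 | h1
  · have : δ (i + 1) ≤ δ i := hδ.2.1 i (i + 1) hi (Nat.le_succ i)
    omega
  by_cases hc : δ (i + 1) + b ≤ δ i
  · omega
  push_neg at hc
  -- the b-th occurrence of i+1 before x
  have hy : ((i + 1 : ℕ), δ (i + 1) + b) ∈
      f '' {p | p ∈ cellOf α β ∧ wle p x ∧ E p = i + 1} := by
    rw [fwd_seg hα hf hE hx (i + 1)]
    exact ⟨rfl, by omega, le_refl _⟩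
  obtain ⟨p', hp', hfp'⟩ := hy
  have hfp'B : f p' ∈ cellOf γ δ := hf.1.1 hp'.1
  have hcγ : δ (i + 1) + b ≤ γ (i + 1) := by
    have := hfp'B.2
    rw [hfp'] at this
    exact this
  have hz : ((i : ℕ), δ (i + 1) + b) ∈ cellOf γ δ := by
    constructor
    · exact hc
    · exact le_trans hcγ (hγ.2.1 i (i + 1) hi (Nat.le_succ i))
  have hzO : ((i : ℕ), δ (i + 1) + b) ∈ f '' {p | p ∈ cellOf α β ∧ E p = i} := by
    rw [fwd_occ_image hf hE i]
    exact ⟨hz, rfl⟩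
  obtain ⟨t, ht, hft⟩ := hzO
  have hwt : wle t p' := by
    apply leSW_wle
    apply hf.2.2 _ ht.1 _ hp'.1
    rw [hft, hfp']
    exact ⟨by omega, le_refl _⟩
  have htS : t ∈ {p | p ∈ cellOf α β ∧ wle p x ∧ E p = i} :=
    ⟨ht.1, wle_trans hwt hp'.2.1, ht.2⟩
  have : f t ∈ {y : ℕ × ℕ | y.1 = i ∧ δ i < y.2 ∧ y.2 ≤ δ i + a} := by
    rw [← fwd_seg hα hf hE hx i]
    exact ⟨t, htS, rfl⟩
  rw [hft] at this
  have := this.2.2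
  omega

end Forward


section Backward

variable {α β γ δ : ℕ → ℕ} {E : ℕ × ℕ → ℕ}

lemma occBefore_def (α β : ℕ → ℕ) (E : ℕ × ℕ → ℕ) (v : ℕ) (x : ℕ × ℕ) :
    occBefore α β E v x = {p | p ∈ cellOf α β ∧ wle p x ∧ E p = v}.ncard := rfl

lemma exists_wle_min {S : Set (ℕ × ℕ)} (hS : S.Finite) (hne : S.Nonempty) :
    ∃ m ∈ S, ∀ p ∈ S, wle m p := by
  classical
  induction S, hS using Set.Finite.induction_on with
  | empty => exact absurd hne (by simp)
  | @insert a s ha hs ih =>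
      rcases s.eq_empty_or_nonempty with rfl | hsne
      · exact ⟨a, by simp, by simp [wle_refl]⟩
      · obtain ⟨m, hm, hmin⟩ := ih hsne
        rcases wle_total m a with h | h
        · exact ⟨m, Set.mem_insert_of_mem _ hm, by
            rintro p (rfl | hp)
            · exact h
            · exact hmin p hp⟩
        · exact ⟨a, Set.mem_insert _ _, by
            rintro p (rfl | hp)
            · exact wle_refl p
            · exact wle_trans h (hmin p hp)⟩

/-- A cell with row between the rows of two cells in the same column is a cell. -/
lemma cell_between_col (hα : IsPartition α) (hβ : IsPartition β)
    {i i' k j : ℕ} (h1 : (i, j) ∈ cellOf α β) (h2 : (i', j) ∈ cellOf α β)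
    (hik : i ≤ k) (hki' : k ≤ i') : (k, j) ∈ cellOf α β := by
  have hi1 : 1 ≤ i := (cell_pos hα h1).1
  constructor
  · exact lt_of_le_of_lt (hβ.2.1 i k hi1 hik) h1.1
  · exact le_trans h2.2 (hα.2.1 k i' (le_trans hi1 hik) hki')

/-- The SE corner of the rectangle spanned by two NW-comparable cells is a cell. -/
lemma cell_NW_rect (hα : IsPartition α) (hβ : IsPartition β)
    {p q : ℕ × ℕ} (hp : p ∈ cellOf α β) (hq : q ∈ cellOf α β)
    (h1 : p.1 ≤ q.1) (h2 : p.2 ≤ q.2) : (q.1, p.2) ∈ cellOf α β := by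
  have hp1 : 1 ≤ p.1 := (cell_pos hα hp).1
  constructor
  · exact lt_of_le_of_lt (hβ.2.1 p.1 q.1 hp1 h1) hp.1
  · exact le_trans h2 hq.2

/-- Entries strictly increase to the strict SE. -/
lemma E_NW_strict (hα : IsPartition α) (hβ : IsPartition β) (hss : IsSSkew α β E)
    {p q : ℕ × ℕ} (hp : p ∈ cellOf α β) (hq : q ∈ cellOf α β)
    (h1 : p.1 < q.1) (h2 : p.2 ≤ q.2) : E p < E q := by
  have hr : (q.1, p.2) ∈ cellOf α β := cell_NW_rect hα hβ hp hq (le_of_lt h1) h2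
  have hcol : E (p.1, p.2) < E (q.1, p.2) := hss.2 p.1 q.1 p.2 (by simpa using hp) hr h1
  have hrow : E (q.1, p.2) ≤ E (q.1, q.2) := hss.1 q.1 p.2 q.2 hr (by simpa using hq) h2
  calc E p = E (p.1, p.2) := by rw [Prod.mk.eta]
    _ < E (q.1, p.2) := hcol
    _ ≤ E (q.1, q.2) := hrow
    _ = E q := by rw [Prod.mk.eta]

lemma E_NW_mono (hα : IsPartition α) (hβ : IsPartition β) (hss : IsSSkew α β E)
    {p q : ℕ × ℕ} (hp : p ∈ cellOf α β) (hq : q ∈ cellOf α β)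
    (h : leNW p q) : E p ≤ E q := by
  obtain ⟨pi, pj⟩ := p
  obtain ⟨qi, qj⟩ := q
  rcases lt_or_eq_of_le h.1 with h1 | h1
  · exact le_of_lt (E_NW_strict hα hβ hss hp hq h1 h.2)
  · simp only at h1
    subst h1
    exact hss.1 pi pj qj hp hq h.2

/-- KEY counting sublemma: prefix condition at the boundary of row `i`, strengthened by
the number of occurrences of `u+1` in row `i`. -/
lemma key_boundary (hα : IsPartition α) (hδ : IsPartition δ) (hss : IsSSkew α β E)
    (hY : ShiftedYam α β 0 δ E) (i u : ℕ) (hu : 1 ≤ u) :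
    δ (u + 1) + {r | r ∈ cellOf α β ∧ r.1 < i ∧ E r = u + 1}.ncard
        + {r | r ∈ cellOf α β ∧ r.1 = i ∧ E r = u + 1}.ncard
      ≤ δ u + {r | r ∈ cellOf α β ∧ r.1 < i ∧ E r = u}.ncard := by
  classical
  set Aw1 := {r | r ∈ cellOf α β ∧ r.1 < i ∧ E r = u + 1} with hAw1
  set Rw1 := {r | r ∈ cellOf α β ∧ r.1 = i ∧ E r = u + 1} with hRw1
  set Aw0 := {r | r ∈ cellOf α β ∧ r.1 < i ∧ E r = u} with hAw0
  have hAw1f : Aw1.Finite := (cell_finite hα).subset (fun r hr => hr.1)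
  have hRw1f : Rw1.Finite := (cell_finite hα).subset (fun r hr => hr.1)
  have hAw0f : Aw0.Finite := (cell_finite hα).subset (fun r hr => hr.1)
  rcases Rw1.eq_empty_or_nonempty with hRe | hRne
  · -- no occurrences of u+1 in row i
    rw [hRe, Set.ncard_empty]
    rcases {r | r ∈ cellOf α β ∧ r.1 < i}.eq_empty_or_nonempty with hAe | hAne
    · have h1 : Aw1 = ∅ := Set.eq_empty_of_subset_empty (by
        rw [← hAe]; exact fun r hr => ⟨hr.1, hr.2.1⟩)
      have h0 : Aw0 = ∅ := Set.eq_empty_of_subset_empty (by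
        rw [← hAe]; exact fun r hr => ⟨hr.1, hr.2.1⟩)
      rw [h1, h0, Set.ncard_empty]
      have := hδ.2.1 u (u + 1) hu (Nat.le_succ u)
      omega
    · obtain ⟨m, hm, hmax⟩ := exists_wle_max
        ((cell_finite hα).subset (fun r hr => hr.1)) hAne
      have hseteq : ∀ w, {p | p ∈ cellOf α β ∧ wle p m ∧ E p = w}
          = {r | r ∈ cellOf α β ∧ r.1 < i ∧ E r = w} := by
        intro w
        ext r
        simp only [Set.mem_setOf_eq]
        constructor
        · rintro ⟨h1, h2, h3⟩
          refine ⟨h1, ?_, h3⟩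
          have : r.1 ≤ m.1 := by unfold wle at h2; omega
          exact lt_of_le_of_lt this hm.2
        · rintro ⟨h1, h2, h3⟩
          exact ⟨h1, hmax r ⟨h1, h2⟩, h3⟩
      have := hY m hm.1 u hu
      simp only [Nat.zero_add] at this
      rw [occBefore_def, occBefore_def, hseteq u, hseteq (u + 1), ← hAw1, ← hAw0] at this
      omega
  · -- take the leftmost occurrence of u+1 in row i
    obtain ⟨m, hm, hmax⟩ := exists_wle_max hRw1f hRne
    have hmA : m ∈ cellOf α β := hm.1
    have hmi : m.1 = i := hm.2.1
    have hmE : E m = u + 1 := hm.2.2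
    have hsub1 : {p | p ∈ cellOf α β ∧ wle p m ∧ E p = u + 1} = Aw1 ∪ Rw1 := by
      ext r
      simp only [Set.mem_setOf_eq, Set.mem_union, hAw1, hRw1]
      constructor
      · rintro ⟨h1, h2, h3⟩
        have : r.1 ≤ m.1 := by unfold wle at h2; omega
        rcases lt_or_eq_of_le this with h | h
        · exact Or.inl ⟨h1, by omega, h3⟩
        · exact Or.inr ⟨h1, by omega, h3⟩
      · rintro (⟨h1, h2, h3⟩ | ⟨h1, h2, h3⟩)
        · exact ⟨h1, Or.inl (by omega), h3⟩
        · exact ⟨h1, hmax r ⟨h1, h2, h3⟩, h3⟩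
    have hsub0 : {p | p ∈ cellOf α β ∧ wle p m ∧ E p = u} ⊆ Aw0 := by
      rintro r ⟨h1, h2, h3⟩
      refine ⟨h1, ?_, h3⟩
      have hr1 : r.1 ≤ m.1 := by unfold wle at h2; omega
      rcases lt_or_eq_of_le hr1 with h | h
      · omega
      · exfalso
        -- r in row i, weakly right of m: E r ≥ E m = u+1
        have hcol : m.2 ≤ r.2 := by unfold wle at h2; omega
        have : E (m.1, m.2) ≤ E (m.1, r.2) := hss.1 m.1 m.2 r.2
          (by simpa [Prod.mk.eta] using hmA)
          (by rw [← h]; simpa [Prod.mk.eta] using h1) hcol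
        rw [Prod.mk.eta] at this
        have hrm : (m.1, r.2) = r := by rw [← h]
        rw [hrm, hmE, h3] at this
        omega
    have hdisj : Disjoint Aw1 Rw1 := by
      rw [Set.disjoint_left]
      rintro r ⟨_, h2, _⟩ ⟨_, h2', _⟩
      omega
    have hY' := hY m hmA u hu
    simp only [Nat.zero_add] at hY'
    rw [occBefore_def, occBefore_def, hsub1, Set.ncard_union_eq hdisj hAw1f hRw1f] at hY'
    have h0 := Set.ncard_le_ncard hsub0 hAw0f
    omega

end Backward


section Backward2

variable {α β γ δ : ℕ → ℕ} {E : ℕ × ℕ → ℕ}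

lemma ncard_row_Icc (i j J : ℕ) :
    ((fun c => ((i : ℕ), c)) '' Set.Icc j J).ncard = J + 1 - j := by
  rw [Set.ncard_image_of_injective _ (fun a b h => by simpa using h)]
  rw [← Finset.coe_Icc, Set.ncard_coe_finset, Nat.card_Icc]

/-- Adjacent same-column step: the SW inequality for a cell directly above another. -/
lemma col_adj (hα : IsPartition α) (hβ : IsPartition β) (hδ : IsPartition δ)
    (hss : IsSSkew α β E) (hpos : ∀ p ∈ cellOf α β, 1 ≤ E p)
    (hY : ShiftedYam α β 0 δ E)
    {i j : ℕ} (hp : (i, j) ∈ cellOf α β) (hq : (i + 1, j) ∈ cellOf α β) :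
    δ (E (i + 1, j)) + occBefore α β E (E (i + 1, j)) (i + 1, j)
      ≤ δ (E (i, j)) + occBefore α β E (E (i, j)) (i, j) := by
  classical
  set u := E (i, j) with hu'
  set v := E (i + 1, j) with hv'
  have huv : u < v := hss.2 i (i + 1) j hp hq (lt_add_one i)
  have hu : 1 ≤ u := hpos _ hp
  have hi1 : 1 ≤ i := (cell_pos hα hp).1
  have hchain : δ v + occBefore α β E v (i + 1, j)
      ≤ δ (u + 1) + occBefore α β E (u + 1) (i + 1, j) :=
    yam_chain hδ hY hq (by omega) (by omega)
  have hYp := hY (i, j) hp u hu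
  simp only [Nat.zero_add] at hYp
  by_cases hveq : v = u + 1
  swap
  · -- v > u + 1 : the set of occurrences of u+1 does not change from p to q
    have hEq : {r | r ∈ cellOf α β ∧ wle r (i + 1, j) ∧ E r = u + 1}
        = {r | r ∈ cellOf α β ∧ wle r (i, j) ∧ E r = u + 1} := by
      ext ⟨a, b⟩
      simp only [Set.mem_setOf_eq]
      constructor
      · rintro ⟨h1, h2, h3⟩
        refine ⟨h1, ?_, h3⟩
        have h2' : a < i + 1 ∨ (a = i + 1 ∧ j ≤ b) := h2
        rcases h2' with hlt | ⟨heq, hle⟩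
        · rcases Nat.lt_or_ge a i with h | h
          · exact Or.inl h
          · have ha : a = i := by omega
            subst ha
            by_contra hcon
            have hjb : b < j ∨ ¬ wle (a, b) (a, j) := by
              right; exact hcon
            have hb : b < j := by
              by_contra hbj
              exact hcon (Or.inr ⟨rfl, by omega⟩)
            have := hss.1 a b j h1 hp (le_of_lt hb)
            rw [h3, ← hu'] at this
            omega
        · exfalso
          subst heq
          have := hss.1 (i + 1) j b hq h1 hle
          rw [h3, ← hv'] at this
          omega
      · rintro ⟨h1, h2, h3⟩
        exact ⟨h1, wle_trans h2 (Or.inl (lt_add_one i)), h3⟩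
    rw [occBefore_def, occBefore_def, hEq] at hchain
    rw [occBefore_def, occBefore_def] at hYp ⊢
    omega
  · -- v = u + 1 : the block argument
    set P : ℕ → Prop := fun c => (i + 1, c) ∈ cellOf α β ∧ E (i + 1, c) = u + 1 with hP
    set J := Nat.findGreatest P (α (i + 1)) with hJ
    have hPj : P j := ⟨hq, by rw [← hv', hveq]⟩
    have hjJ : j ≤ J := Nat.le_findGreatest hq.2 hPj
    have hJle : J ≤ α (i + 1) := Nat.findGreatest_le _
    have hPJ : P J := Nat.findGreatest_spec hq.2 hPj
    have hgr : ∀ c, J < c → c ≤ α (i + 1) → ¬ P c :=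
      fun c h1 h2 => Nat.findGreatest_is_greatest h1 h2
    have hcell1 : ∀ c, j ≤ c → c ≤ J → (i + 1, c) ∈ cellOf α β := by
      intro c h1 h2
      exact ⟨lt_of_lt_of_le hq.1 h1, le_trans h2 hJle⟩
    have hE1 : ∀ c, j ≤ c → c ≤ J → E (i + 1, c) = u + 1 := by
      intro c h1 h2
      have hlo := hss.1 (i + 1) j c hq (hcell1 c h1 h2) h1
      have hhi := hss.1 (i + 1) c J (hcell1 c h1 h2) hPJ.1 h2
      rw [← hv', hveq] at hlo
      rw [hPJ.2] at hhi
      omega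
    have hcell0 : ∀ c, j ≤ c → c ≤ J → (i, c) ∈ cellOf α β := by
      intro c h1 h2
      refine ⟨lt_of_lt_of_le hp.1 h1, ?_⟩
      exact le_trans (le_trans h2 hJle) (hα.2.1 i (i + 1) hi1 (Nat.le_succ i))
    have hE0 : ∀ c, j ≤ c → c ≤ J → E (i, c) = u := by
      intro c h1 h2
      have hlo := hss.1 i j c hp (hcell0 c h1 h2) h1
      have hhi := hss.2 i (i + 1) c (hcell0 c h1 h2) (hcell1 c h1 h2) (lt_add_one i)
      rw [← hu'] at hlo
      rw [hE1 c h1 h2] at hhi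
      omega
    set T1 := (fun c => ((i + 1 : ℕ), c)) '' Set.Icc j J with hT1
    set T0 := (fun c => ((i : ℕ), c)) '' Set.Icc j J with hT0
    have hT1f : T1.Finite := (Set.finite_Icc _ _).image _
    have hT0f : T0.Finite := (Set.finite_Icc _ _).image _
    set Sq1 := {r | r ∈ cellOf α β ∧ wle r (i + 1, j) ∧ E r = u + 1} with hSq1
    set Sp1 := {r | r ∈ cellOf α β ∧ wle r (i, j) ∧ E r = u + 1} with hSp1
    set Sp0 := {r | r ∈ cellOf α β ∧ wle r (i, j) ∧ E r = u} with hSp0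
    set Aw1 := {r | r ∈ cellOf α β ∧ r.1 < i ∧ E r = u + 1} with hAw1
    set Rw1 := {r | r ∈ cellOf α β ∧ r.1 = i ∧ E r = u + 1} with hRw1
    set Aw0 := {r | r ∈ cellOf α β ∧ r.1 < i ∧ E r = u} with hAw0
    have hSp1f : Sp1.Finite := (cell_finite hα).subset (fun r hr => hr.1)
    have hSp0f : Sp0.Finite := (cell_finite hα).subset (fun r hr => hr.1)
    have hAw1f : Aw1.Finite := (cell_finite hα).subset (fun r hr => hr.1)
    have hRw1f : Rw1.Finite := (cell_finite hα).subset (fun r hr => hr.1)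
    have hAw0f : Aw0.Finite := (cell_finite hα).subset (fun r hr => hr.1)
    -- (a) occurrences of u+1 before q = those before p, plus the block T1
    have ha : Sq1 = Sp1 ∪ T1 := by
      ext ⟨a, b⟩
      simp only [hSq1, hSp1, hT1, Set.mem_setOf_eq, Set.mem_union, Set.mem_image,
        Set.mem_Icc, Prod.mk.injEq]
      constructor
      · rintro ⟨h1, h2, h3⟩
        have h2' : a < i + 1 ∨ (a = i + 1 ∧ j ≤ b) := h2
        rcases h2' with hlt | ⟨heq, hle⟩
        · rcases Nat.lt_or_ge a i with h | h
          · exact Or.inl ⟨h1, Or.inl h, h3⟩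
          · have haa : a = i := by omega
            subst haa
            have hb : j ≤ b := by
              by_contra hbj
              push_neg at hbj
              have := hss.1 a b j h1 hp (le_of_lt hbj)
              rw [h3, ← hu'] at this
              omega
            exact Or.inl ⟨h1, Or.inr ⟨rfl, hb⟩, h3⟩
        · subst heq
          have hbJ : b ≤ J := by
            by_contra hcon
            push_neg at hcon
            exact hgr b hcon h1.2 ⟨h1, h3⟩
          exact Or.inr ⟨b, ⟨hle, hbJ⟩, rfl, rfl⟩
      · rintro (⟨h1, h2, h3⟩ | ⟨c, ⟨hc1, hc2⟩, rfl, rfl⟩)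
        · exact ⟨h1, wle_trans h2 (Or.inl (lt_add_one i)), h3⟩
        · exact ⟨hcell1 c hc1 hc2, Or.inr ⟨rfl, hc1⟩, hE1 c hc1 hc2⟩
    have hadisj : Disjoint Sp1 T1 := by
      rw [Set.disjoint_left]
      rintro r ⟨_, h2, _⟩ hT
      obtain ⟨c, hc, rfl⟩ := hT
      have h2' : i + 1 < i ∨ (i + 1 = i ∧ j ≤ j) := by
        have h2'' : (i + 1 : ℕ) < i ∨ ((i + 1 : ℕ) = i ∧ j ≤ (c : ℕ)) := h2
        omega
      omega
    -- (b) occurrences of u before p include rows < i and the block T0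
    have hb : Aw0 ∪ T0 ⊆ Sp0 := by
      rintro r (hr | hr)
      · exact ⟨hr.1, Or.inl hr.2.1, hr.2.2⟩
      · obtain ⟨c, hc, rfl⟩ := hr
        exact ⟨hcell0 c hc.1 hc.2, Or.inr ⟨rfl, hc.1⟩, hE0 c hc.1 hc.2⟩
    have hbdisj : Disjoint Aw0 T0 := by
      rw [Set.disjoint_left]
      rintro r hr hT
      obtain ⟨c, hc, rfl⟩ := hT
      have := hr.2.1
      simp only at this
      omega
    -- (c) occurrences of u+1 before p split into rows < i and row i
    have hc : Sp1 ⊆ Aw1 ∪ Rw1 := by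
      rintro r ⟨h1, h2, h3⟩
      have h2' : r.1 < i ∨ (r.1 = i ∧ j ≤ r.2) := h2
      rcases h2' with h | h
      · exact Or.inl ⟨h1, h, h3⟩
      · exact Or.inr ⟨h1, h.1, h3⟩
    -- (d) the key boundary inequality
    have hd := key_boundary hα hδ hss hY i u hu
    rw [← hAw1, ← hRw1, ← hAw0] at hd
    -- assemble
    have e1 : occBefore α β E (u + 1) (i + 1, j) = Sp1.ncard + (J + 1 - j) := by
      rw [occBefore_def, ← hSq1, ha, Set.ncard_union_eq hadisj hSp1f hT1f, hT1,
        ncard_row_Icc]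
    have e2 : occBefore α β E (u + 1) (i, j) = Sp1.ncard := by
      rw [occBefore_def, ← hSp1]
    have e3 : Sp1.ncard ≤ Aw1.ncard + Rw1.ncard :=
      le_trans (Set.ncard_le_ncard hc (hAw1f.union hRw1f)) (Set.ncard_union_le _ _)
    have e4 : Aw0.ncard + (J + 1 - j) ≤ occBefore α β E u (i, j) := by
      rw [occBefore_def, ← hSp0]
      calc Aw0.ncard + (J + 1 - j) = (Aw0 ∪ T0).ncard := by
            rw [Set.ncard_union_eq hbdisj hAw0f hT0f, hT0, ncard_row_Icc]
        _ ≤ Sp0.ncard := Set.ncard_le_ncard hb hSp0f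
    rw [e2] at hYp
    omega

end Backward2


section Backward3

variable {α β γ δ : ℕ → ℕ} {E : ℕ × ℕ → ℕ}

lemma col_gen_aux (hα : IsPartition α) (hβ : IsPartition β) (hδ : IsPartition δ)
    (hss : IsSSkew α β E) (hpos : ∀ p ∈ cellOf α β, 1 ≤ E p)
    (hY : ShiftedYam α β 0 δ E) (d : ℕ) :
    ∀ pi pj, (pi, pj) ∈ cellOf α β → (pi + d, pj) ∈ cellOf α β →
      δ (E (pi + d, pj)) + occBefore α β E (E (pi + d, pj)) (pi + d, pj)
        ≤ δ (E (pi, pj)) + occBefore α β E (E (pi, pj)) (pi, pj) := by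
  induction d with
  | zero => intro pi pj hp hq; exact le_refl _
  | succ n ih =>
      intro pi pj hp hq
      have hmid : (pi + n, pj) ∈ cellOf α β :=
        cell_between_col hα hβ hp hq (by omega) (by omega)
      exact le_trans (col_adj hα hβ hδ hss hpos hY hmid hq) (ih pi pj hp hmid)

lemma col_gen (hα : IsPartition α) (hβ : IsPartition β) (hδ : IsPartition δ)
    (hss : IsSSkew α β E) (hpos : ∀ p ∈ cellOf α β, 1 ≤ E p)
    (hY : ShiftedYam α β 0 δ E) {pi qi j : ℕ}
    (hp : (pi, j) ∈ cellOf α β) (hq : (qi, j) ∈ cellOf α β) (h : pi ≤ qi) :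
    δ (E (qi, j)) + occBefore α β E (E (qi, j)) (qi, j)
      ≤ δ (E (pi, j)) + occBefore α β E (E (pi, j)) (pi, j) := by
  obtain ⟨d, rfl⟩ : ∃ d, qi = pi + d := ⟨qi - pi, by omega⟩
  exact col_gen_aux hα hβ hδ hss hpos hY d pi j hp hq

lemma row_gen (hα : IsPartition α) (hδ : IsPartition δ)
    (hss : IsSSkew α β E) (hpos : ∀ p ∈ cellOf α β, 1 ≤ E p)
    (hY : ShiftedYam α β 0 δ E) {i j j' : ℕ}
    (hp : (i, j) ∈ cellOf α β) (hq : (i, j') ∈ cellOf α β) (h : j ≤ j') :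
    δ (E (i, j')) + occBefore α β E (E (i, j')) (i, j')
      ≤ δ (E (i, j)) + occBefore α β E (E (i, j)) (i, j) := by
  have huv : E (i, j) ≤ E (i, j') := hss.1 i j j' hp hq h
  have hw : wle (i, j') (i, j) := Or.inr ⟨rfl, h⟩
  have hchain := yam_chain hδ hY hq (hpos _ hp) huv
  have hmono := occBefore_mono (β := β) (T := E) (v := E (i, j)) hα hw
  omega

/-- The NW → SW property for the canonical map. -/
lemma NW_SW (hα : IsPartition α) (hβ : IsPartition β) (hδ : IsPartition δ)
    (hss : IsSSkew α β E) (hpos : ∀ p ∈ cellOf α β, 1 ≤ E p)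
    (hY : ShiftedYam α β 0 δ E) {p q : ℕ × ℕ}
    (hp : p ∈ cellOf α β) (hq : q ∈ cellOf α β) (h : leNW p q) :
    E p ≤ E q ∧
      δ (E q) + occBefore α β E (E q) q ≤ δ (E p) + occBefore α β E (E p) p := by
  refine ⟨E_NW_mono hα hβ hss hp hq h, ?_⟩
  obtain ⟨pi, pj⟩ := p
  obtain ⟨qi, qj⟩ := q
  obtain ⟨h1, h2⟩ := h
  simp only at h1 h2
  have hr : (qi, pj) ∈ cellOf α β := cell_NW_rect hα hβ hp hq h1 h2
  exact le_trans (row_gen hα hδ hss hpos hY hr hq h2)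
    (col_gen hα hβ hδ hss hpos hY hp hr h1)

/-- Every admissible rank is attained: surjectivity of the rank map. -/
lemma rank_surj (hα : IsPartition α)
    (hcount : ∀ i, 1 ≤ i → occCount α β E i = γ i - δ i) {v c : ℕ} (hv : 1 ≤ v)
    (hlo : δ v < c) (hhi : c ≤ γ v) :
    ∃ p ∈ cellOf α β, E p = v ∧ occBefore α β E v p = c - δ v := by
  classical
  set O := {p | p ∈ cellOf α β ∧ E p = v} with hO
  set ρ := fun p => occBefore α β E v p with hρ
  have hinj : Set.InjOn ρ O := by
    intro p hp q hq hpq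
    by_contra hne
    rcases wle_total p q with h | h
    · have := occBefore_strict hα hq.1 hq.2 h hne
      simp only [hρ] at hpq
      omega
    · have := occBefore_strict hα hp.1 hp.2 h (Ne.symm hne)
      simp only [hρ] at hpq
      omega
  have himg : ρ '' O ⊆ Set.Icc 1 (occCount α β E v) := by
    rintro x ⟨p, hp, rfl⟩
    exact ⟨occBefore_pos hα hp.1 hp.2, occBefore_le_occCount hα E v p⟩
  have hcard : (ρ '' O).ncard = occCount α β E v := by
    rw [Set.ncard_image_of_injOn hinj]
    rfl
  have hIcc_card : (Set.Icc 1 (occCount α β E v)).ncard = occCount α β E v := by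
    rw [← Finset.coe_Icc, Set.ncard_coe_finset, Nat.card_Icc]
    omega
  have heq : ρ '' O = Set.Icc 1 (occCount α β E v) :=
    Set.eq_of_subset_of_ncard_le himg (by rw [hcard, hIcc_card]) (Set.finite_Icc _ _)
  have hmem : c - δ v ∈ ρ '' O := by
    rw [heq, hcount v hv]
    constructor <;> omega
  obtain ⟨p, hp, hpc⟩ := hmem
  exact ⟨p, hp.1, hp.2, hpc⟩

/-- The second picture property for the canonical map. -/
lemma bwd_prop2 (hα : IsPartition α) (hβ : IsPartition β) (hδ : IsPartition δ)
    (hss : IsSSkew α β E) (hpos : ∀ p ∈ cellOf α β, 1 ≤ E p)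
    (hY : ShiftedYam α β 0 δ E) {p q : ℕ × ℕ}
    (hp : p ∈ cellOf α β) (hq : q ∈ cellOf α β)
    (h1 : E p ≤ E q)
    (h2 : δ (E p) + occBefore α β E (E p) p ≤ δ (E q) + occBefore α β E (E q) q) :
    leSW p q := by
  by_cases huv : E p = E q
  · -- same symbol
    have hwle : wle p q := by
      rcases wle_total p q with h | h
      · exact h
      · by_cases hne : q = p
        · rw [hne]; exact wle_refl p
        · exfalso
          have := occBefore_strict (T := E) (v := E p) hα hp rfl h hne
          rw [← huv] at h2
          omega
    rcases hwle with h | ⟨h, h'⟩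
    · refine ⟨le_of_lt h, ?_⟩
      by_contra hcon
      push_neg at hcon
      have := E_NW_strict hα hβ hss hp hq h (le_of_lt hcon)
      omega
    · exact ⟨le_of_eq h, h'⟩
  · have huv' : E p < E q := lt_of_le_of_ne h1 huv
    have hq1 : p.1 ≤ q.1 := by
      by_contra hcon
      push_neg at hcon
      have hw : wle q p := Or.inl hcon
      have hne : q ≠ p := by
        rintro rfl
        exact absurd hcon (lt_irrefl _)
      have hstrict := occBefore_strict (T := E) (v := E p) hα hp rfl hw hne
      have hchain := yam_chain hδ hY hq (hpos _ hp) (le_of_lt huv')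
      omega
    refine ⟨hq1, ?_⟩
    by_contra hcon
    push_neg at hcon
    obtain ⟨pi, pj⟩ := p
    obtain ⟨qi, qj⟩ := q
    have hr : (qi, pj) ∈ cellOf α β := cell_NW_rect hα hβ hp hq hq1 (le_of_lt hcon)
    have hA := col_gen hα hβ hδ hss hpos hY hp hr hq1
    have hB := row_gen hα hδ hss hpos hY hr hq (le_of_lt hcon)
    have hw : wle (qi, qj) (qi, pj) := Or.inr ⟨rfl, le_of_lt hcon⟩
    have hne : (qi, qj) ≠ (qi, pj) := by
      rw [ne_eq, Prod.mk.injEq]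
      omega
    have htv : E (qi, pj) ≤ E (qi, qj) := hss.1 qi pj qj hr hq (le_of_lt hcon)
    by_cases htq : E (qi, pj) = E (qi, qj)
    · have hstrict := occBefore_strict (T := E) (v := E (qi, pj)) hα hr rfl hw hne
      rw [htq] at hA hstrict
      omega
    · have htv' : E (qi, pj) < E (qi, qj) := lt_of_le_of_ne htv htq
      have hchain : δ (E (qi, qj)) + occBefore α β E (E (qi, qj)) (qi, qj)
          ≤ δ (E (qi, pj) + 1) + occBefore α β E (E (qi, pj) + 1) (qi, qj) :=
        yam_chain hδ hY hq (by omega) (by omega)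
      have hYq := hY (qi, qj) hq (E (qi, pj)) (hpos _ hr)
      simp only [Nat.zero_add] at hYq
      have hstrict := occBefore_strict (T := E) (v := E (qi, pj)) hα hr rfl hw hne
      omega

end Backward3


/-- a skew tableau `E` of shape `α/β` is the row reading of a picture
`f : α/β → γ/δ` if and only if `E` is semistandard with positive entries, for each `i`
the symbol `i` occurs exactly `γᵢ − δᵢ` times, and `E` is `δ`-shifted Yamanouchi. -/
theorem statement16 (α β γ δ : ℕ → ℕ)
    (hα : IsPartition α) (hβ : IsPartition β) (hβα : ∀ i, β i ≤ α i)
    (hγ : IsPartition γ) (hδ : IsPartition δ) (hδγ : ∀ i, δ i ≤ γ i)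
    (E : ℕ × ℕ → ℕ) :
    (∃ f : ℕ × ℕ → ℕ × ℕ, IsPicture α β γ δ f ∧ ∀ p ∈ cellOf α β, E p = (f p).1) ↔
      (IsSSkew α β E ∧ (∀ p ∈ cellOf α β, 1 ≤ E p) ∧
        (∀ i, 1 ≤ i → occCount α β E i = γ i - δ i) ∧
        ShiftedYam α β 0 δ E) := by
  constructor
  · rintro ⟨f, hf, hE⟩
    refine ⟨⟨fun i j j' h1 h2 h => fwd_row hf hE h1 h2 h,
      fun i i' j h1 h2 h => fwd_col hf hE h1 h2 h⟩, ?_, ?_, ?_⟩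
    · intro p hp
      rw [hE p hp]
      exact (cell_pos hγ (hf.1.1 hp)).1
    · intro i _
      exact fwd_occCount hα hf hE i
    · exact fwd_yam hα hγ hδ hf hE
  · rintro ⟨hss, hpos, hcount, hY⟩
    refine ⟨fun p => (E p, δ (E p) + occBefore α β E (E p) p),
      ⟨⟨?_, ?_, ?_⟩, ?_, ?_⟩, fun p _ => rfl⟩
    · -- maps to
      intro p hp
      have hv : 1 ≤ E p := hpos p hp
      have h1 : 1 ≤ occBefore α β E (E p) p := occBefore_pos hα hp rfl
      have h2 : occBefore α β E (E p) p ≤ occCount α β E (E p) :=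
        occBefore_le_occCount hα E (E p) p
      have h3 := hcount (E p) hv
      have h4 := hδγ (E p)
      show δ (E p) < δ (E p) + occBefore α β E (E p) p ∧
        δ (E p) + occBefore α β E (E p) p ≤ γ (E p)
      omega
    · -- injective
      intro p hp q hq hfe
      simp only [Prod.mk.injEq] at hfe
      obtain ⟨he1, he2⟩ := hfe
      by_contra hne
      rcases wle_total p q with h | h
      · have := occBefore_strict (T := E) (v := E q) hα hq rfl h hne
        rw [he1] at he2
        omega
      · have := occBefore_strict (T := E) (v := E p) hα hp rfl h (Ne.symm hne)
        rw [← he1] at he2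
        omega
    · -- surjective
      intro y hy
      have hv : 1 ≤ y.1 := (cell_pos hγ hy).1
      obtain ⟨p, hp, hEp, hocc⟩ := rank_surj hα hcount hv hy.1 hy.2
      refine ⟨p, hp, ?_⟩
      show (E p, δ (E p) + occBefore α β E (E p) p) = y
      rw [hEp, hocc]
      have hc : δ y.1 + (y.2 - δ y.1) = y.2 := by
        have := hy.1
        omega
      rw [hc]
    · -- NW → SW
      intro p hp q hq h
      exact NW_SW hα hβ hδ hss hpos hY hp hq h
    · -- SW ← NW on images
      intro p hp q hq h
      exact bwd_prop2 hα hβ hδ hss hpos hY hp hq h.1 h.2
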